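/- Let α₂, α₄, β₂, β₅ be real numbers with α₄β₅ ≠ 0, and suppose that α₂/α₄ ∉ ℚ or β₂/β₅ − α₂/α₄ ∉ ℚ. Let I be a nonempty open interval contained in {x ∈ ℝ : x > 0 and β₅x² + α₄ > 0}. Then the function Ω(x) = x^{α₂/α₄}·(β₅x² + α₄)^{(β₂/β₅ − α₂/α₄)/2} is transcendental over the rational functions on I: there is no nonzero polynomial P ∈ ℝ[X,Y] in two variables such that P(x, Ω(x)) = 0 for all x ∈ I. (Verification of condition (H1) in Section 5.1 of the paper.) -/

import Mathlib

open Real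

section H1Aux

open Polynomial

lemma L1 (D N : ℝ[X]) (j : ℕ) (hj : j + 1 < D.natTrailingDegree + N.natTrailingDegree) :
    (D * N.derivative).coeff j = 0 := by
  rw [coeff_mul]
  apply Finset.sum_eq_zero
  rintro ⟨i, l⟩ hil
  rw [Finset.HasAntidiagonal.mem_antidiagonal] at hil
  by_cases hi : i < D.natTrailingDegree
  · simp [coeff_eq_zero_of_lt_natTrailingDegree hi]
  · push_neg at hi
    have hl : l + 1 < N.natTrailingDegree := by omega
    simp [coeff_derivative, coeff_eq_zero_of_lt_natTrailingDegree hl]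

lemma L2 (D N : ℝ[X]) (k : ℕ) (hk : D.natTrailingDegree + N.natTrailingDegree = k + 1) :
    (D * N.derivative).coeff k =
      (N.natTrailingDegree : ℝ) * D.trailingCoeff * N.trailingCoeff := by
  rw [coeff_mul]
  rcases Nat.eq_zero_or_pos N.natTrailingDegree with h0 | hpos
  · rw [h0]
    rw [h0, add_zero] at hk
    have : ∀ x ∈ Finset.HasAntidiagonal.antidiagonal k, D.coeff x.1 * N.derivative.coeff x.2 = 0 := by
      rintro ⟨i, l⟩ hil
      rw [Finset.HasAntidiagonal.mem_antidiagonal] at hil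
      have : i < D.natTrailingDegree := by omega
      simp [coeff_eq_zero_of_lt_natTrailingDegree this]
    rw [Finset.sum_eq_zero this]; ring
  · obtain ⟨n1, hn1⟩ : ∃ n1, N.natTrailingDegree = n1 + 1 := ⟨N.natTrailingDegree - 1, by omega⟩
    rw [Finset.sum_eq_single_of_mem (D.natTrailingDegree, n1)]
    · rw [coeff_derivative]
      have : N.coeff (n1 + 1) = N.trailingCoeff := by rw [← hn1]; rfl
      rw [this]
      have : D.coeff D.natTrailingDegree = D.trailingCoeff := rfl
      rw [this, hn1]
      push_cast; ring
    · rw [Finset.HasAntidiagonal.mem_antidiagonal]; omega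
    · rintro ⟨i, l⟩ hil hne
      rw [Finset.HasAntidiagonal.mem_antidiagonal] at hil
      by_cases hi : i < D.natTrailingDegree
      · simp [coeff_eq_zero_of_lt_natTrailingDegree hi]
      · push_neg at hi
        have : l + 1 < N.natTrailingDegree := by
          rcases Nat.lt_or_ge (l+1) N.natTrailingDegree with h | h
          · exact h
          · exfalso; apply hne; ext <;> omega
        simp [coeff_derivative, coeff_eq_zero_of_lt_natTrailingDegree this]

lemma L3 (D N : ℝ[X]) (j : ℕ) (hj : D.natDegree + N.natDegree ≤ j) :
    (D * N.derivative).coeff j = 0 := by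
  rw [coeff_mul]
  apply Finset.sum_eq_zero
  rintro ⟨i, l⟩ hil
  rw [Finset.HasAntidiagonal.mem_antidiagonal] at hil
  by_cases hi : D.natDegree < i
  · simp [coeff_eq_zero_of_natDegree_lt hi]
  · push_neg at hi
    have hl : N.natDegree < l + 1 := by omega
    simp [coeff_derivative, coeff_eq_zero_of_natDegree_lt hl]

lemma L4 (D N : ℝ[X]) (k : ℕ) (hk : D.natDegree + N.natDegree = k + 1) :
    (D * N.derivative).coeff k =
      (N.natDegree : ℝ) * D.leadingCoeff * N.leadingCoeff := by
  rcases Nat.eq_zero_or_pos N.natDegree with h0 | hpos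
  · have : N = C (N.coeff 0) := eq_C_of_natDegree_eq_zero h0
    rw [this]
    simp [h0]
  · obtain ⟨n1, hn1⟩ : ∃ n1, N.natDegree = n1 + 1 := ⟨N.natDegree - 1, by omega⟩
    rw [coeff_mul, Finset.sum_eq_single_of_mem (D.natDegree, n1)]
    · rw [coeff_derivative]
      have h1 : N.coeff (n1 + 1) = N.leadingCoeff := by rw [← hn1]; rfl
      have h2 : D.coeff D.natDegree = D.leadingCoeff := rfl
      rw [h1, h2, hn1]
      push_cast; ring
    · rw [Finset.HasAntidiagonal.mem_antidiagonal]; omega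
    · rintro ⟨i, l⟩ hil hne
      rw [Finset.HasAntidiagonal.mem_antidiagonal] at hil
      by_cases hi : D.natDegree < i
      · simp [coeff_eq_zero_of_natDegree_lt hi]
      · push_neg at hi
        have : N.natDegree < l + 1 := by
          rcases Nat.lt_or_ge N.natDegree (l+1) with h | h
          · exact h
          · exfalso; apply hne; ext <;> omega
        simp [coeff_derivative, coeff_eq_zero_of_natDegree_lt this]

lemma nz (a c α₄ β₅ : ℝ) (hα₄ : α₄ ≠ 0) (hβ₅ : β₅ ≠ 0)
    (hirr : Irrational a ∨ Irrational (2*c)) (m : ℕ) (hm : 0 < m)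
    (D N : ℝ[X]) (hD : D ≠ 0) (hN : N ≠ 0) :
    X * (C β₅ * X^2 + C α₄) * (D * N.derivative - D.derivative * N)
      + (m:ℝ) • ((C ((a+2*c)*β₅) * X^2 + C (a*α₄)) * (D * N)) ≠ 0 := by
  intro h
  set W : ℝ[X] := D * N.derivative - D.derivative * N with hW
  have hE : X * (C β₅ * X^2 + C α₄) * W
      + (m:ℝ) • ((C ((a+2*c)*β₅) * X^2 + C (a*α₄)) * (D * N))
      = C β₅ * (W * X^3) + C α₄ * (W * X^1)
        + C ((m:ℝ)) * (C ((a+2*c)*β₅) * ((D*N) * X^2))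
        + C ((m:ℝ)) * (C (a*α₄) * (D*N)) := by
    rw [smul_eq_C_mul]; ring
  rw [hE] at h
  have hco : ∀ k : ℕ, β₅ * (if 3 ≤ k then W.coeff (k-3) else 0)
      + α₄ * (if 1 ≤ k then W.coeff (k-1) else 0)
      + (m:ℝ) * ((a+2*c)*β₅ * (if 2 ≤ k then (D*N).coeff (k-2) else 0))
      + (m:ℝ) * ((a*α₄) * (D*N).coeff k) = 0 := by
    intro k
    have := congrArg (fun p : ℝ[X] => p.coeff k) h
    simpa only [coeff_add, coeff_C_mul, coeff_mul_X_pow', coeff_zero] using this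
  have htcDN : (D*N).trailingCoeff ≠ 0 := by
    simp [trailingCoeff_eq_zero, mul_ne_zero hD hN]
  have htc : D.trailingCoeff * N.trailingCoeff ≠ 0 := by rwa [← trailingCoeff_mul]
  have hlcDN : D.leadingCoeff * N.leadingCoeff ≠ 0 :=
    mul_ne_zero (by simp [leadingCoeff_eq_zero, hD]) (by simp [leadingCoeff_eq_zero, hN])
  have hm' : (m:ℝ) ≠ 0 := Nat.cast_ne_zero.mpr hm.ne'
  -- a is rational
  have ha : ∃ q : ℚ, (q:ℝ) = a := by
    rcases h0 : D.natTrailingDegree + N.natTrailingDegree with _ | k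
    · have := hco 0
      rw [if_neg (by omega), if_neg (by omega), if_neg (by omega)] at this
      have h00 : (D*N).coeff 0 = (D*N).trailingCoeff := by
        have hz : (D*N).natTrailingDegree = 0 := by
          rw [natTrailingDegree_mul hD hN]; omega
        rw [← hz]; rfl
      rw [h00] at this
      have hfac : (m:ℝ) * (a * α₄ * (D*N).trailingCoeff) = 0 := by linear_combination this
      have ha0 : a = 0 := by
        rcases mul_eq_zero.mp hfac with h1 | h1
        · exact absurd h1 hm'
        · rcases mul_eq_zero.mp h1 with h2 | h2
          · rcases mul_eq_zero.mp h2 with h3 | h3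
            · exact h3
            · exact absurd h3 hα₄
          · exact absurd h2 htcDN
      exact ⟨0, by simp [ha0]⟩
    · have hk1 : D.natTrailingDegree + N.natTrailingDegree = k + 1 := h0
      have hthis := hco (k+1)
      have e3 : (if 3 ≤ k+1 then W.coeff (k+1-3) else 0) = 0 := by
        split_ifs with h3
        · rw [hW, coeff_sub, L1 D N _ (by omega),
            show (D.derivative*N).coeff (k+1-3) = (N*D.derivative).coeff (k+1-3) from by
              rw [mul_comm],
            L1 N D _ (by omega)]; ring
        · rfl
      have e2 : (if 2 ≤ k+1 then (D*N).coeff (k+1-2) else 0) = 0 := by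
        split_ifs with h2
        · apply coeff_eq_zero_of_lt_natTrailingDegree
          rw [natTrailingDegree_mul hD hN]; omega
        · rfl
      have e1 : (if 1 ≤ k+1 then W.coeff (k+1-1) else 0)
          = ((N.natTrailingDegree:ℝ) - D.natTrailingDegree)
            * (D.trailingCoeff * N.trailingCoeff) := by
        rw [if_pos (by omega : 1 ≤ k+1), hW, coeff_sub, show k+1-1 = k from rfl, L2 D N k hk1,
          show (D.derivative*N).coeff k = (N*D.derivative).coeff k from by rw [mul_comm],
          L2 N D k (by omega)]; ring
      have e0 : (D*N).coeff (k+1) = D.trailingCoeff * N.trailingCoeff := by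
        have hntd : (D*N).natTrailingDegree = k+1 := by rw [natTrailingDegree_mul hD hN]; omega
        rw [show (D*N).coeff (k+1) = (D*N).trailingCoeff from by rw [← hntd]; rfl,
          trailingCoeff_mul]
      rw [e3, e2, e1, e0] at hthis
      have hfac : (α₄ * (((N.natTrailingDegree:ℝ) - D.natTrailingDegree) + (m:ℝ)*a))
          * (D.trailingCoeff * N.trailingCoeff) = 0 := by linear_combination hthis
      have key : ((N.natTrailingDegree:ℝ) - D.natTrailingDegree) + (m:ℝ)*a = 0 := by
        rcases mul_eq_zero.mp hfac with h1 | h1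
        · rcases mul_eq_zero.mp h1 with h2 | h2
          · exact absurd h2 hα₄
          · exact h2
        · exact absurd h1 htc
      refine ⟨((D.natTrailingDegree:ℚ) - N.natTrailingDegree)/m, ?_⟩
      push_cast
      field_simp
      linarith
  -- a + 2c is rational
  have hac : ∃ q : ℚ, (q:ℝ) = a + 2*c := by
    rcases h0 : D.natDegree + N.natDegree with _ | k
    · have hthis := hco 2
      have e3 : (if 3 ≤ 2 then W.coeff (2-3) else 0) = 0 := by rw [if_neg (by omega)]
      have e1 : (if 1 ≤ 2 then W.coeff (2-1) else 0) = 0 := by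
        rw [if_pos (by omega : 1 ≤ 2), hW, coeff_sub, L3 D N _ (by omega),
          show (D.derivative*N).coeff (2-1) = (N*D.derivative).coeff (2-1) from by rw [mul_comm],
          L3 N D _ (by omega)]; ring
      have e2 : (if 2 ≤ 2 then (D*N).coeff (2-2) else 0)
          = D.leadingCoeff * N.leadingCoeff := by
        rw [if_pos (by omega : 2 ≤ 2), show (2:ℕ)-2 = D.natDegree + N.natDegree from by omega,
          coeff_mul_degree_add_degree]
      have e0 : (D*N).coeff 2 = 0 := by
        apply coeff_eq_zero_of_natDegree_lt
        rw [natDegree_mul hD hN]; omega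
      rw [e3, e1, e2, e0] at hthis
      have hfac : ((m:ℝ) * ((a+2*c)*β₅)) * (D.leadingCoeff * N.leadingCoeff) = 0 := by
        linear_combination hthis
      have hac0 : a + 2*c = 0 := by
        rcases mul_eq_zero.mp hfac with h1 | h1
        · rcases mul_eq_zero.mp h1 with h2 | h2
          · exact absurd h2 hm'
          · rcases mul_eq_zero.mp h2 with h3 | h3
            · exact h3
            · exact absurd h3 hβ₅
        · exact absurd h1 hlcDN
      exact ⟨0, by simp [hac0]⟩
    · have hk1 : D.natDegree + N.natDegree = k + 1 := h0
      have hthis := hco (k+3)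
      have e1 : (if 1 ≤ k+3 then W.coeff (k+3-1) else 0) = 0 := by
        rw [if_pos (by omega : 1 ≤ k+3), hW, coeff_sub, L3 D N _ (by omega),
          show (D.derivative*N).coeff (k+3-1) = (N*D.derivative).coeff (k+3-1) from by
            rw [mul_comm],
          L3 N D _ (by omega)]; ring
      have e3 : (if 3 ≤ k+3 then W.coeff (k+3-3) else 0)
          = ((N.natDegree:ℝ) - D.natDegree) * (D.leadingCoeff * N.leadingCoeff) := by
        rw [if_pos (by omega : 3 ≤ k+3), show k+3-3 = k from by omega, hW, coeff_sub,
          L4 D N k hk1,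
          show (D.derivative*N).coeff k = (N*D.derivative).coeff k from by rw [mul_comm],
          L4 N D k (by omega)]; ring
      have e2 : (if 2 ≤ k+3 then (D*N).coeff (k+3-2) else 0)
          = D.leadingCoeff * N.leadingCoeff := by
        rw [if_pos (by omega : 2 ≤ k+3), show k+3-2 = D.natDegree + N.natDegree from by omega,
          coeff_mul_degree_add_degree]
      have e0 : (D*N).coeff (k+3) = 0 := by
        apply coeff_eq_zero_of_natDegree_lt
        rw [natDegree_mul hD hN]; omega
      rw [e1, e3, e2, e0] at hthis
      have hfac : (β₅ * (((N.natDegree:ℝ) - D.natDegree) + (m:ℝ)*(a+2*c)))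
          * (D.leadingCoeff * N.leadingCoeff) = 0 := by linear_combination hthis
      have key : ((N.natDegree:ℝ) - D.natDegree) + (m:ℝ)*(a+2*c) = 0 := by
        rcases mul_eq_zero.mp hfac with h1 | h1
        · rcases mul_eq_zero.mp h1 with h2 | h2
          · exact absurd h2 hβ₅
          · exact h2
        · exact absurd h1 hlcDN
      refine ⟨((D.natDegree:ℚ) - N.natDegree)/m, ?_⟩
      push_cast
      field_simp
      linarith
  obtain ⟨qa, hqa⟩ := ha
  obtain ⟨qac, hqac⟩ := hac
  rcases hirr with hi | hi
  · exact hi ⟨qa, hqa⟩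
  · exact hi ⟨qac - qa, by push_cast; linarith⟩

noncomputable def dfExpr (a c α₄ β₅ : ℝ) (p : ℕ → Polynomial ℝ) (j : ℕ) (x : ℝ) : ℝ :=
  (Polynomial.eval x (Polynomial.derivative (p j)) * x ^ ((j:ℝ)*a)
    + Polynomial.eval x (p j) * (((j:ℝ)*a) * x ^ ((j:ℝ)*a - 1))) * (β₅*x^2+α₄) ^ ((j:ℝ)*c)
  + (Polynomial.eval x (p j) * x ^ ((j:ℝ)*a)) *
      (β₅*(2*x) * ((j:ℝ)*c) * (β₅*x^2+α₄) ^ ((j:ℝ)*c - 1))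

lemma hasDerivAt_term (a c α₄ β₅ : ℝ) (p : ℕ → Polynomial ℝ) (j : ℕ) (x : ℝ)
    (hx0 : 0 < x) (hg : 0 < β₅*x^2+α₄) :
    HasDerivAt (fun y => Polynomial.eval y (p j) * y ^ ((j:ℝ)*a) * (β₅*y^2+α₄) ^ ((j:ℝ)*c))
      (dfExpr a c α₄ β₅ p j x) x := by
  have h1 : HasDerivAt (fun y => Polynomial.eval y (p j))
      (Polynomial.eval x (Polynomial.derivative (p j))) x := (p j).hasDerivAt x
  have h2 : HasDerivAt (fun y : ℝ => y ^ ((j:ℝ)*a)) (((j:ℝ)*a) * x ^ ((j:ℝ)*a - 1)) x :=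
    Real.hasDerivAt_rpow_const (Or.inl hx0.ne')
  have h3 : HasDerivAt (fun y : ℝ => β₅*y^2+α₄) (β₅*(2*x)) x := by
    have := ((hasDerivAt_pow 2 x).const_mul β₅).add_const α₄
    refine this.congr_deriv ?_
    norm_num
  have h4 := h3.rpow_const (p := (j:ℝ)*c) (Or.inl hg.ne')
  exact (h1.mul h2).mul h4

lemma deriv_step (a c α₄ β₅ : ℝ) (s t : ℝ)
    (hI : ∀ x ∈ Set.Ioo s t, 0 < x ∧ 0 < β₅*x^2+α₄)
    (S : Finset ℕ) (p : ℕ → Polynomial ℝ) (j0 : ℕ) (hj0 : ∀ j ∈ S, j0 ≤ j)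
    (hsum : ∀ x ∈ Set.Ioo s t,
      ∑ j ∈ S, (p j).eval x * x ^ ((j:ℝ)*a) * (β₅*x^2+α₄) ^ ((j:ℝ)*c) = 0) :
    ∀ x ∈ Set.Ioo s t,
      ∑ j ∈ S, (X * (C β₅ * X^2 + C α₄) *
            (p j0 * (p j).derivative - (p j0).derivative * (p j))
          + ((j - j0 : ℕ):ℝ) • ((C ((a+2*c)*β₅) * X^2 + C (a*α₄)) * (p j0 * p j))).eval x
        * x ^ ((j:ℝ)*a) * (β₅*x^2+α₄) ^ ((j:ℝ)*c) = 0 := by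
  intro x hx
  obtain ⟨hx0, hg⟩ := hI x hx
  have hDF0 : ∑ j ∈ S, dfExpr a c α₄ β₅ p j x = 0 := by
    have hsumF : HasDerivAt
        (fun y => ∑ j ∈ S, Polynomial.eval y (p j) * y ^ ((j:ℝ)*a)
          * (β₅*y^2+α₄) ^ ((j:ℝ)*c))
        (∑ j ∈ S, dfExpr a c α₄ β₅ p j x) x :=
      HasDerivAt.fun_sum (fun j _ => hasDerivAt_term a c α₄ β₅ p j x hx0 hg)
    have h0 : HasDerivAt
        (fun y => ∑ j ∈ S, Polynomial.eval y (p j) * y ^ ((j:ℝ)*a)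
          * (β₅*y^2+α₄) ^ ((j:ℝ)*c)) 0 x := by
      have hev : (fun y => ∑ j ∈ S, Polynomial.eval y (p j) * y ^ ((j:ℝ)*a)
          * (β₅*y^2+α₄) ^ ((j:ℝ)*c)) =ᶠ[nhds x] (fun _ => (0:ℝ)) := by
        filter_upwards [Ioo_mem_nhds hx.1 hx.2] with y hy using hsum y hy
      exact (hasDerivAt_const x (0:ℝ)).congr_of_eventuallyEq hev
    exact hsumF.unique h0
  have hterm : ∀ j ∈ S,
      (X * (C β₅ * X^2 + C α₄) *
            (p j0 * (p j).derivative - (p j0).derivative * (p j))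
          + ((j - j0 : ℕ):ℝ) • ((C ((a+2*c)*β₅) * X^2 + C (a*α₄)) * (p j0 * p j))).eval x
        * x ^ ((j:ℝ)*a) * (β₅*x^2+α₄) ^ ((j:ℝ)*c)
      = (Polynomial.eval x (p j0) * (x * (β₅*x^2+α₄))) * dfExpr a c α₄ β₅ p j x
        - (x * (β₅*x^2+α₄) * Polynomial.eval x (Polynomial.derivative (p j0))
            + (((j0:ℝ)*a)*(β₅*x^2+α₄) + ((j0:ℝ)*c)*(2*β₅*x^2)) * Polynomial.eval x (p j0))
          * (Polynomial.eval x (p j) * x ^ ((j:ℝ)*a) * (β₅*x^2+α₄) ^ ((j:ℝ)*c)) := by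
    intro j hj
    have hc : ((j - j0:ℕ):ℝ) = (j:ℝ) - (j0:ℝ) := by
      push_cast [Nat.cast_sub (hj0 j hj)]; ring
    have hA : x ^ ((j:ℝ)*a - 1) = x ^ ((j:ℝ)*a) / x := by
      rw [Real.rpow_sub hx0, Real.rpow_one]
    have hB : (β₅*x^2+α₄) ^ ((j:ℝ)*c - 1) = (β₅*x^2+α₄) ^ ((j:ℝ)*c) / (β₅*x^2+α₄) := by
      rw [Real.rpow_sub hg, Real.rpow_one]
    simp only [dfExpr, eval_add, eval_mul, eval_smul, eval_X, eval_pow, eval_C, eval_sub,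
      smul_eq_mul]
    rw [hc, hA, hB]
    have hg' : x ^ 2 * β₅ + α₄ ≠ 0 := by rw [mul_comm]; exact hg.ne'
    field_simp
    ring
  rw [Finset.sum_congr rfl hterm, Finset.sum_sub_distrib, ← Finset.mul_sum, ← Finset.mul_sum,
    hDF0, hsum x hx, mul_zero, mul_zero, sub_zero]

lemma key (a c α₄ β₅ : ℝ) (hα₄ : α₄ ≠ 0) (hβ₅ : β₅ ≠ 0)
    (hirr : Irrational a ∨ Irrational (2*c)) (s t : ℝ) (hst : s < t)
    (hI : ∀ x ∈ Set.Ioo s t, 0 < x ∧ 0 < β₅*x^2+α₄) :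
    ∀ (n : ℕ) (S : Finset ℕ) (p : ℕ → Polynomial ℝ), S.card = n → S.Nonempty →
      (∀ j ∈ S, p j ≠ 0) →
      (∀ x ∈ Set.Ioo s t,
        ∑ j ∈ S, (p j).eval x * x ^ ((j:ℝ)*a) * (β₅*x^2+α₄) ^ ((j:ℝ)*c) = 0)
      → False := by
  intro n
  induction n with
  | zero =>
    intro S p hcard hne _ _
    rw [Finset.card_eq_zero] at hcard
    exact hne.ne_empty hcard
  | succ n ih =>
    intro S p hcard hne hp hsum
    set j0 := S.min' hne with hj0def
    have hj0S : j0 ∈ S := S.min'_mem hne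
    have hj0le : ∀ j ∈ S, j0 ≤ j := fun j hj => S.min'_le j hj
    have hD : p j0 ≠ 0 := hp j0 hj0S
    rcases Finset.eq_empty_or_nonempty (S.erase j0) with hSe | hSe
    · -- S = {j0}
      have hsing : S = {j0} := by
        rcases Finset.subset_singleton_iff.mp (fun b hb => by
          by_contra hb'
          exact (Finset.eq_empty_iff_forall_notMem.mp hSe b)
            (Finset.mem_erase.mpr ⟨by simpa using hb', hb⟩)) with h | h
        · exact absurd h hne.ne_empty
        · exact h
      have hroot : ∀ x ∈ Set.Ioo s t, (p j0).IsRoot x := by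
        intro x hx
        obtain ⟨hx0, hg⟩ := hI x hx
        have := hsum x hx
        rw [hsing, Finset.sum_singleton] at this
        have hA := (Real.rpow_pos_of_pos hx0 ((j0:ℝ)*a)).ne'
        have hB := (Real.rpow_pos_of_pos hg ((j0:ℝ)*c)).ne'
        rcases mul_eq_zero.mp this with h1 | h1
        · rcases mul_eq_zero.mp h1 with h2 | h2
          · exact h2
          · exact absurd h2 hA
        · exact absurd h1 hB
      exact hD (Polynomial.eq_zero_of_infinite_isRoot _
        ((Set.Ioo_infinite hst).mono hroot))
    · -- inductive step
      set q : ℕ → Polynomial ℝ := fun j =>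
        X * (C β₅ * X^2 + C α₄) * (p j0 * (p j).derivative - (p j0).derivative * (p j))
          + ((j - j0 : ℕ):ℝ) • ((C ((a+2*c)*β₅) * X^2 + C (a*α₄)) * (p j0 * p j)) with hqdef
      have hq : ∀ j ∈ S.erase j0, q j ≠ 0 := by
        intro j hj
        have hjS : j ∈ S := Finset.mem_of_mem_erase hj
        have hjne : j ≠ j0 := Finset.ne_of_mem_erase hj
        have hm : 0 < j - j0 := by
          have := hj0le j hjS
          omega
        exact nz a c α₄ β₅ hα₄ hβ₅ hirr (j - j0) hm (p j0) (p j) hD (hp j hjS)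
      have hqsumS := deriv_step a c α₄ β₅ s t hI S p j0 hj0le hsum
      have hq0 : q j0 = 0 := by
        rw [hqdef]
        simp only [Nat.sub_self, Nat.cast_zero, zero_smul, add_zero,
          mul_comm (p j0) (Polynomial.derivative (p j0))]
        rw [sub_self, mul_zero]
      have hqsum : ∀ x ∈ Set.Ioo s t,
          ∑ j ∈ S.erase j0, (q j).eval x * x ^ ((j:ℝ)*a) * (β₅*x^2+α₄) ^ ((j:ℝ)*c) = 0 := by
        intro x hx
        have := hqsumS x hx
        rw [← Finset.add_sum_erase S _ hj0S] at this
        have h1 : (q j0).eval x * x ^ ((j0:ℝ)*a) * (β₅*x^2+α₄) ^ ((j0:ℝ)*c)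
            + ∑ j ∈ S.erase j0, (q j).eval x * x ^ ((j:ℝ)*a) * (β₅*x^2+α₄) ^ ((j:ℝ)*c)
            = 0 := this
        rw [hq0] at h1
        simpa using h1
      exact ih (S.erase j0) q (by rw [Finset.card_erase_of_mem hj0S, hcard]; rfl) hSe hq hqsum

end H1Aux

/-- Condition (H1) in Section 5.1: `Ω(x) = x^(α₂/α₄) (β₅ x² + α₄)^((β₂/β₅ - α₂/α₄)/2)` is
transcendental over the rational functions on any nonempty open interval contained in
`{x | x > 0 ∧ β₅ x² + α₄ > 0}`, provided `α₄ β₅ ≠ 0` and `α₂/α₄ ∉ ℚ` or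
`β₂/β₅ - α₂/α₄ ∉ ℚ`. -/
theorem H1_sec51 (α₂ α₄ β₂ β₅ : ℝ) (h : α₄ * β₅ ≠ 0)
    (hirr : Irrational (α₂ / α₄) ∨ Irrational (β₂ / β₅ - α₂ / α₄))
    (s t : ℝ) (hst : s < t)
    (hI : Set.Ioo s t ⊆ {x : ℝ | 0 < x ∧ 0 < β₅ * x ^ 2 + α₄}) :
    ¬ ∃ P : MvPolynomial (Fin 2) ℝ, P ≠ 0 ∧
      ∀ x ∈ Set.Ioo s t,
        MvPolynomial.eval
          ![x, x ^ (α₂ / α₄) *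
              (β₅ * x ^ 2 + α₄) ^ ((β₂ / β₅ - α₂ / α₄) / 2)] P = 0 := by
  rintro ⟨P, hP, hval⟩
  have hα₄ : α₄ ≠ 0 := left_ne_zero_of_mul h
  have hβ₅ : β₅ ≠ 0 := right_ne_zero_of_mul h
  set a : ℝ := α₂ / α₄ with ha
  set c : ℝ := (β₂ / β₅ - α₂ / α₄) / 2 with hc
  have hirr' : Irrational a ∨ Irrational (2*c) := by
    rcases hirr with h1 | h1
    · exact Or.inl h1
    · right
      have : 2*c = β₂ / β₅ - α₂ / α₄ := by rw [hc]; ring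
      rwa [this]
  -- set up the polynomial machinery
  set P' : MvPolynomial (Fin 2) ℝ := MvPolynomial.rename (Equiv.swap (0 : Fin 2) 1) P with hP'def
  have hP' : P' ≠ 0 := by
    intro h0
    apply hP
    have := MvPolynomial.rename_injective (R := ℝ) (⇑(Equiv.swap (0 : Fin 2) 1))
      (Equiv.injective _)
    apply this
    exact h0.trans (map_zero _).symm
  set Q1 : Polynomial (MvPolynomial (Fin 1) ℝ) := MvPolynomial.finSuccEquiv ℝ 1 P' with hQ1def
  have hQ1 : Q1 ≠ 0 := by
    intro h0
    apply hP'
    have : MvPolynomial.finSuccEquiv ℝ 1 P' = MvPolynomial.finSuccEquiv ℝ 1 0 := by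
      rw [← hQ1def, h0, map_zero]
    exact (MvPolynomial.finSuccEquiv ℝ 1).injective this
  set f : MvPolynomial (Fin 1) ℝ →+* Polynomial ℝ :=
    (Polynomial.mapRingHom (MvPolynomial.isEmptyAlgEquiv ℝ (Fin 0)).toAlgHom.toRingHom).comp
      (MvPolynomial.finSuccEquiv ℝ 0).toAlgHom.toRingHom with hfdef
  have hfinj : Function.Injective f := by
    rw [hfdef, RingHom.coe_comp]
    apply Function.Injective.comp
    · rw [Polynomial.coe_mapRingHom]
      exact Polynomial.map_injective _ (MvPolynomial.isEmptyAlgEquiv ℝ (Fin 0)).injective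
    · exact (MvPolynomial.finSuccEquiv ℝ 0).injective
  have hfeval : ∀ (x : ℝ) (q : MvPolynomial (Fin 1) ℝ),
      MvPolynomial.eval ![x] q = Polynomial.eval x (f q) := by
    intro x q
    induction q using MvPolynomial.induction_on with
    | C r => simp [hfdef, MvPolynomial.finSuccEquiv_apply]; exact (MvPolynomial.coeff_zero_C r).symm
    | add p q hp hq => simp [map_add, hp, hq]
    | mul_X p i hp =>
      have : i = 0 := Subsingleton.elim i 0
      subst this
      simp [map_mul, hp, hfdef, MvPolynomial.finSuccEquiv_X_zero]
  have hgrand : ∀ x y : ℝ, MvPolynomial.eval ![x, y] P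
      = ∑ j ∈ Q1.support, (f (Q1.coeff j)).eval x * y ^ j := by
    intro x y
    have hcomp : (![y,x] ∘ ⇑(Equiv.swap (0:Fin 2) 1)) = ![x,y] := by
      funext i
      fin_cases i <;> simp [Equiv.swap_apply_def]
    have h1 : MvPolynomial.eval ![x, y] P = MvPolynomial.eval ![y, x] P' := by
      rw [hP'def, MvPolynomial.eval_rename, hcomp]
    have h2 : MvPolynomial.eval ![y, x] P'
        = Polynomial.eval y (Polynomial.map (MvPolynomial.eval ![x]) Q1) := by
      have := MvPolynomial.eval_eq_eval_mv_eval' (![x] : Fin 1 → ℝ) y P'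
      rw [← hQ1def] at this
      exact this
    rw [h1, h2, Polynomial.eval_map, Polynomial.eval₂_eq_sum, Polynomial.sum]
    apply Finset.sum_congr rfl
    intro j _
    rw [hfeval x (Q1.coeff j)]
  -- apply the key lemma
  apply key a c α₄ β₅ hα₄ hβ₅ hirr' s t hst (fun x hx => hI hx)
    Q1.support.card Q1.support (fun j => f (Q1.coeff j)) rfl
    (Polynomial.support_nonempty.mpr hQ1)
    (fun j hj => by
      intro h0
      apply Polynomial.mem_support_iff.mp hj
      apply hfinj
      rw [map_zero]
      exact h0)
  intro x hx
  obtain ⟨hx0, hg⟩ := hI hx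
  have hpow : ∀ j : ℕ, (x ^ a * (β₅*x^2+α₄) ^ c)^j
      = x ^ ((j:ℝ)*a) * (β₅*x^2+α₄) ^ ((j:ℝ)*c) := by
    intro j
    rw [mul_pow, ← Real.rpow_natCast (x^a) j, ← Real.rpow_natCast ((β₅*x^2+α₄)^c) j,
      ← Real.rpow_mul hx0.le, ← Real.rpow_mul hg.le, mul_comm a, mul_comm c]
  have := hval x hx
  rw [hgrand x (x ^ a * (β₅*x^2+α₄) ^ c)] at this
  rw [← this]
  refine Finset.sum_congr rfl fun j _ => ?_
  rw [hpow j]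
  ring
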